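/- Let n ≥ 2 and let Γ be a finite connected graph of rank n (i.e. with free fundamental group of rank n) in which every vertex has valency at least 3. Then the number of geometric edges of Γ is at least n and at most 3n − 3; consequently any strictly decreasing chain of such graphs obtained by successively collapsing nonempty forests has at most 2n − 2 terms, so the spine K_n of outer space is a simplicial complex of dimension at most 2n − 3. -/
import Mathlib

set_option maxHeartbeats 800000

/-!
Formalization of statements from:
H. Glover, H.-W. Henn, "On the mod-p cohomology of Out(F_{2(p-1)})".
-/

noncomputable section
namespace OutFormal

/-! ### Finite graphs `(V, E, σ, t)` -/

/-- A finite graph: finite sets of vertices and (oriented) edges, a fixed-point-free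
involution `σ` pairing each oriented edge with its opposite, and a terminal vertex map
`t`. -/
structure FinGraph where
  V : Type
  E : Type
  [fintypeV : Fintype V]
  [fintypeE : Fintype E]
  edgeInv : E → E
  t : E → V
  edgeInv_invol : ∀ e, edgeInv (edgeInv e) = e
  edgeInv_ne : ∀ e, edgeInv e ≠ e

attribute [instance] FinGraph.fintypeV FinGraph.fintypeE

namespace FinGraph

variable (Γ : FinGraph)

/-- The source (initial vertex) of an oriented edge. -/
def src (e : Γ.E) : Γ.V := Γ.t (Γ.edgeInv e)

/-- `Walk Γ u w l`: the list of oriented edges `l` is an edge path from `u` to `w`. -/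
inductive Walk : Γ.V → Γ.V → List Γ.E → Prop
  | nil (v : Γ.V) : Walk v v []
  | cons {w : Γ.V} (e : Γ.E) {l : List Γ.E} (h : Walk (Γ.t e) w l) :
      Walk (Γ.src e) w (e :: l)

/-- Connectivity of a graph. -/
def Connected : Prop := ∀ u w : Γ.V, ∃ l, Γ.Walk u w l

/-- The number of geometric edges: the number of `σ`-orbits of oriented edges. -/
def edgeCount : ℕ := Fintype.card Γ.E / 2

/-- The number of vertices. -/
def vertexCount : ℕ := Fintype.card Γ.V

/-- The rank (first Betti number) of a connected graph:
`(number of geometric edges) − (number of vertices) + 1`. -/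
def rank : ℕ := Γ.edgeCount + 1 - Γ.vertexCount

/-- The valency of a vertex: the number of oriented edges ending at it. -/
def valency (v : Γ.V) : ℕ := by
  classical
  exact Fintype.card {e : Γ.E // Γ.t e = v}

/-- A reduced (backtracking-free) edge path. -/
def Reduced (l : List Γ.E) : Prop := l.Chain' (fun a b => b ≠ Γ.edgeInv a)

/-- A set of oriented edges, closed under `σ`, is a forest if it supports no nonempty
reduced closed walk. -/
def IsForest (F : Set Γ.E) : Prop :=
  (∀ e ∈ F, Γ.edgeInv e ∈ F) ∧
  ∀ v l, l ≠ [] → (∀ e ∈ l, e ∈ F) → Γ.Walk v v l → ¬ Γ.Reduced l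

/-- There is no separating (geometric) edge: any two vertices can be joined by an edge
path avoiding any given geometric edge. -/
def NoSepEdge : Prop :=
  ∀ (e₀ : Γ.E) (u w : Γ.V), ∃ l, Γ.Walk u w l ∧ e₀ ∉ l ∧ Γ.edgeInv e₀ ∉ l

/-- An admissible graph: connected, all valencies at least `3`, no separating edges. -/
def Admissible : Prop :=
  Γ.Connected ∧ (∀ v, 3 ≤ Γ.valency v) ∧ Γ.NoSepEdge

end FinGraph

/-- An isomorphism of graphs. -/
structure GIso (Γ₁ Γ₂ : FinGraph) where
  eV : Γ₁.V ≃ Γ₂.V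
  eE : Γ₁.E ≃ Γ₂.E
  map_edgeInv : ∀ e, eE (Γ₁.edgeInv e) = Γ₂.edgeInv (eE e)
  map_t : ∀ e, eV (Γ₁.t e) = Γ₂.t (eE e)

namespace FinGraph

variable (Γ : FinGraph)

/-- The graph obtained from `Γ` by collapsing each tree of the forest `F` (given with
its closure under `σ`) to a point: the vertices are identified along the edges of `F`,
and the edges of `F` are deleted. -/
def collapse (F : Set Γ.E) (hF : ∀ e ∈ F, Γ.edgeInv e ∈ F) : FinGraph where
  V := Quotient (Relation.EqvGen.setoid (fun v w => ∃ e ∈ F, Γ.src e = v ∧ Γ.t e = w))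
  E := {e : Γ.E // e ∉ F}
  fintypeV := @Quotient.fintype _ _ _ (Classical.decRel _)
  fintypeE := @Subtype.fintype _ _ (Classical.decPred _) _
  edgeInv := fun e => ⟨Γ.edgeInv e.1, fun h => e.2 (by
    have := hF _ h
    rwa [Γ.edgeInv_invol] at this)⟩
  t := fun e => Quotient.mk _ (Γ.t e.1)
  edgeInv_invol := fun e => Subtype.ext (Γ.edgeInv_invol e.1)
  edgeInv_ne := fun e h => Γ.edgeInv_ne e.1 (congrArg Subtype.val h)

end FinGraph


/-! ### The model `Z/p`-graphs: the rose, `Θ_{p-1}^{s,t}`, and `Θ_{p-1} ∨ Θ_{p-1}` -/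

/-- The rose with `p + m` petals, `p` of which will be cyclically permuted. -/
def roseModel (p m : ℕ) : FinGraph where
  V := Unit
  E := (Fin p ⊕ Fin m) × Bool
  edgeInv := fun e => (e.1, !e.2)
  t := fun _ => ()
  edgeInv_invol := fun e => by simp
  edgeInv_ne := fun e h => by
    have := congrArg Prod.snd h
    simp at this

/-- The rotation of the rose, cyclically permuting the `p` distinguished petals and
fixing the remaining `m` petals. -/
def roseRot (p m : ℕ) : GIso (roseModel p m) (roseModel p m) where
  eV := Equiv.refl _
  eE := Equiv.prodCongr ((finRotate p).sumCongr (Equiv.refl _)) (Equiv.refl _)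
  map_edgeInv := fun e => rfl
  map_t := fun e => rfl

/-- The graph `Θ_{p-1}^{s,t}`: two vertices `0, 1`, joined by `p` edges, with `s` loops
attached at the vertex `0` and `t` loops at the vertex `1`. -/
def thetaModel (p s t : ℕ) : FinGraph where
  V := Fin 2
  E := (Fin p × Bool) ⊕ ((Fin s ⊕ Fin t) × Bool)
  edgeInv := fun e => match e with
    | Sum.inl (j, b) => Sum.inl (j, !b)
    | Sum.inr (c, b) => Sum.inr (c, !b)
  t := fun e => match e with
    | Sum.inl (_, true) => 1
    | Sum.inl (_, false) => 0
    | Sum.inr (Sum.inl _, _) => 0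
    | Sum.inr (Sum.inr _, _) => 1
  edgeInv_invol := fun e => by rcases e with ⟨j, b⟩ | ⟨c, b⟩ <;> simp
  edgeInv_ne := fun e h => by
    rcases e with ⟨j, b⟩ | ⟨c, b⟩ <;>
      · simp only [Sum.inl.injEq, Sum.inr.injEq, Prod.mk.injEq] at h
        rcases h with ⟨-, h2⟩
        simp at h2

/-- The rotation of `Θ_{p-1}^{s,t}`, cyclically rotating the `p` edges of `Θ_{p-1}` and
fixing all attached loops. -/
def thetaRot (p s t : ℕ) : GIso (thetaModel p s t) (thetaModel p s t) where
  eV := Equiv.refl _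
  eE := Equiv.sumCongr (Equiv.prodCongr (finRotate p) (Equiv.refl _)) (Equiv.refl _)
  map_edgeInv := fun e => by rcases e with ⟨j, b⟩ | ⟨c, b⟩ <;> rfl
  map_t := fun e => by rcases e with ⟨j, b | b⟩ | ⟨c | c, b⟩ <;> rfl

/-- The wedge `Θ_{p-1} ∨ Θ_{p-1}`: vertices `0` (left), `1` (wedge point), `2` (right),
with `p` edges between `0, 1` and `p` edges between `1, 2`. -/
def wedgeModel (p : ℕ) : FinGraph where
  V := Fin 3
  E := (Fin p × Bool) ⊕ (Fin p × Bool)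
  edgeInv := fun e => match e with
    | Sum.inl (j, b) => Sum.inl (j, !b)
    | Sum.inr (j, b) => Sum.inr (j, !b)
  t := fun e => match e with
    | Sum.inl (_, true) => 0
    | Sum.inl (_, false) => 1
    | Sum.inr (_, true) => 2
    | Sum.inr (_, false) => 1
  edgeInv_invol := fun e => by rcases e with ⟨j, b⟩ | ⟨j, b⟩ <;> simp
  edgeInv_ne := fun e h => by
    rcases e with ⟨j, b⟩ | ⟨j, b⟩ <;>
      · simp only [Sum.inl.injEq, Sum.inr.injEq, Prod.mk.injEq] at h
        rcases h with ⟨-, h2⟩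
        simp at h2

/-- The diagonal rotation of `Θ_{p-1} ∨ Θ_{p-1}`, cyclically rotating the `p` edges of
each of the two copies of `Θ_{p-1}`. -/
def wedgeRot (p : ℕ) : GIso (wedgeModel p) (wedgeModel p) where
  eV := Equiv.refl _
  eE := Equiv.sumCongr (Equiv.prodCongr (finRotate p) (Equiv.refl _))
    (Equiv.prodCongr (finRotate p) (Equiv.refl _))
  map_edgeInv := fun e => by rcases e with ⟨j, b⟩ | ⟨j, b⟩ <;> rfl
  map_t := fun e => by rcases e with ⟨j, b | b⟩ | ⟨j, b | b⟩ <;> rfl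

/-!
STATEMENT 19.  Let `n ≥ 2` and let `Γ` be a finite connected graph of rank `n` in
which every vertex has valency at least `3`.  Then the number of geometric edges of
`Γ` is at least `n` and at most `3n − 3`.  Consequently any strictly decreasing chain
of such graphs obtained by successively collapsing nonempty forests has at most
`2n − 2` terms; this is the statement that the spine `K_n` of outer space (whose
`k`-simplices correspond to chains of `k` successive forest collapses of marked
admissible graphs of rank `n`) is a simplicial complex of dimension at most `2n − 3`,
and the second clause below is that combinatorial statement about chains.
-/
/-- A finset closed under a fixed-point-free involution has even cardinality. -/
lemma even_card_of_closed {α : Type} [DecidableEq α] (σ : α → α)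
    (hinv : ∀ a, σ (σ a) = a) (hne : ∀ a, σ a ≠ a) :
    ∀ S : Finset α, (∀ e ∈ S, σ e ∈ S) → Even S.card := by
  intro S
  induction S using Finset.strongInduction with
  | _ S ih =>
    intro hcl
    rcases S.eq_empty_or_nonempty with rfl | ⟨e, he⟩
    · simp
    · have hσe : σ e ∈ S := hcl e he
      have hsub : ({e, σ e} : Finset α) ⊆ S := by
        intro x hx
        simp only [Finset.mem_insert, Finset.mem_singleton] at hx
        rcases hx with rfl | rfl <;> assumption
      have hss : S \ {e, σ e} ⊂ S :=
        Finset.sdiff_ssubset hsub ⟨e, by simp⟩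
      have hcl' : ∀ a ∈ S \ {e, σ e}, σ a ∈ S \ {e, σ e} := by
        intro a ha
        simp only [Finset.mem_sdiff, Finset.mem_insert, Finset.mem_singleton] at ha ⊢
        obtain ⟨haS, hane⟩ := ha
        push_neg at hane
        refine ⟨hcl a haS, ?_⟩
        rintro (h | h)
        · exact hane.2 (by rw [← h, hinv])
        · have h2 : σ (σ a) = σ (σ e) := by rw [h]
          rw [hinv, hinv] at h2
          exact hane.1 h2
      have hcard2 : ({e, σ e} : Finset α).card = 2 := by
        rw [Finset.card_insert_of_notMem (by simp [Ne.symm (hne e)]),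
          Finset.card_singleton]
      have hcard : (S \ {e, σ e}).card = S.card - 2 := by
        rw [Finset.card_sdiff_of_subset hsub, hcard2]
      have h2le : 2 ≤ S.card := hcard2 ▸ Finset.card_le_card hsub
      have hev := ih _ hss hcl'
      rw [hcard] at hev
      obtain ⟨m, hm⟩ := hev
      exact ⟨m + 1, by omega⟩

lemma FinGraph.cardE_eq (Γ : FinGraph) : Fintype.card Γ.E = 2 * Γ.edgeCount := by
  classical
  have hev : Even (Fintype.card Γ.E) := by
    rw [← Finset.card_univ]
    exact even_card_of_closed Γ.edgeInv Γ.edgeInv_invol Γ.edgeInv_ne _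
      (fun e _ => Finset.mem_univ _)
  obtain ⟨m, hm⟩ := hev
  unfold FinGraph.edgeCount
  omega

lemma FinGraph.cardE_eq_sum (Γ : FinGraph) :
    Fintype.card Γ.E = ∑ v : Γ.V, Γ.valency v := by
  classical
  have h : Fintype.card Γ.E = ∑ v : Γ.V, Fintype.card {e : Γ.E // Γ.t e = v} := by
    rw [← Fintype.card_sigma]
    exact (Fintype.card_congr (Equiv.sigmaFiberEquiv Γ.t)).symm
  rw [h]
  refine Finset.sum_congr rfl (fun v _ => ?_)
  unfold FinGraph.valency
  exact Fintype.card_congr (Equiv.refl _)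

/-- The edge bounds of Statement 19, as a standalone lemma. -/
lemma edge_bounds (n : ℕ) (hn : 2 ≤ n) (Γ : FinGraph)
    (hval : ∀ v, 3 ≤ Γ.valency v) (hrank : Γ.rank = n) :
    n ≤ Γ.edgeCount ∧ Γ.edgeCount ≤ 3 * n - 3 := by
  classical
  have hE2 := Γ.cardE_eq
  have hsum := Γ.cardE_eq_sum
  have h3V : 3 * Fintype.card Γ.V ≤ Fintype.card Γ.E := by
    rw [hsum]
    calc 3 * Fintype.card Γ.V = ∑ _v : Γ.V, 3 := by
          rw [Finset.sum_const, Finset.card_univ]; ring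
      _ ≤ ∑ v : Γ.V, Γ.valency v := Finset.sum_le_sum (fun v _ => hval v)
  have hVpos : 1 ≤ Fintype.card Γ.V ∨ Fintype.card Γ.E = 0 := by
    rcases Nat.eq_zero_or_pos (Fintype.card Γ.V) with h | h
    · right
      have : IsEmpty Γ.V := Fintype.card_eq_zero_iff.mp h
      have : IsEmpty Γ.E := ⟨fun e => this.false (Γ.t e)⟩
      exact Fintype.card_eq_zero
    · left; exact h
  unfold FinGraph.rank FinGraph.edgeCount FinGraph.vertexCount at *
  omega

lemma GIso.cardE_eq {Γ₁ Γ₂ : FinGraph} (φ : GIso Γ₁ Γ₂) :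
    Fintype.card Γ₁.E = Fintype.card Γ₂.E := Fintype.card_congr φ.eE

theorem statement19 (n : ℕ) (hn : 2 ≤ n) :
    -- edge bounds
    (∀ Γ : FinGraph, Γ.Connected → (∀ v, 3 ≤ Γ.valency v) → Γ.rank = n →
      n ≤ Γ.edgeCount ∧ Γ.edgeCount ≤ 3 * n - 3) ∧
    -- chains of forest collapses have at most `2n - 2` terms
    (∀ (k : ℕ) (c : Fin (k + 1) → FinGraph),
      (∀ i, (c i).Connected ∧ (∀ v, 3 ≤ (c i).valency v) ∧ (c i).rank = n) →
      (∀ i : Fin k,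
        ∃ (F : Set (c i.castSucc).E) (hfor : (c i.castSucc).IsForest F),
          F.Nonempty ∧
          Nonempty (GIso ((c i.castSucc).collapse F hfor.1) (c i.succ))) →
      k + 1 ≤ 2 * n - 2) := by
  classical
  constructor
  · intro Γ _ hval hrank
    exact edge_bounds n hn Γ hval hrank
  · intro k c hgood hcoll
    set f : Fin (k + 1) → ℕ := fun i => (c i).edgeCount with hf
    have hbounds : ∀ i, n ≤ f i ∧ f i ≤ 3 * n - 3 := fun i =>
      edge_bounds n hn (c i) (hgood i).2.1 (hgood i).2.2
    have hstep : ∀ i : Fin k, f i.succ < f i.castSucc := by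
      intro i
      obtain ⟨F, hfor, hFne, ⟨iso⟩⟩ := hcoll i
      have hFclosed := hfor.1
      have hFev : Even (Fintype.card ↥F) := by
        rw [← Set.toFinset_card]
        exact even_card_of_closed (c i.castSucc).edgeInv (c i.castSucc).edgeInv_invol
          (c i.castSucc).edgeInv_ne F.toFinset
          (fun a ha => Set.mem_toFinset.mpr (hFclosed a (Set.mem_toFinset.mp ha)))
      have hF1 : 1 ≤ Fintype.card ↥F :=
        Fintype.card_pos_iff.mpr hFne.to_subtype
      have hcompl : Fintype.card (((c i.castSucc).collapse F hfor.1).E) =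
          Fintype.card (c i.castSucc).E - Fintype.card ↥F := by
        have h1 : Fintype.card (((c i.castSucc).collapse F hfor.1).E) =
            Fintype.card {e : (c i.castSucc).E // ¬ e ∈ F} :=
          Fintype.card_congr (Equiv.refl _)
        have h2 : Fintype.card ↥F = Fintype.card {e : (c i.castSucc).E // e ∈ F} :=
          Fintype.card_congr (Equiv.refl _)
        rw [h1, h2, Fintype.card_subtype_compl]
      have hiso : Fintype.card (((c i.castSucc).collapse F hfor.1).E) =
          Fintype.card (c i.succ).E := iso.cardE_eq
      have hcs := (c i.castSucc).cardE_eq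
      have hsc := (c i.succ).cardE_eq
      have hFle : Fintype.card ↥F ≤ Fintype.card (c i.castSucc).E :=
        Fintype.card_le_of_injective Subtype.val Subtype.val_injective
      obtain ⟨b, hb⟩ := hFev
      show (c i.succ).edgeCount < (c i.castSucc).edgeCount
      omega
    have key : ∀ i : Fin (k + 1), f i + i.val ≤ f 0 := by
      intro i
      induction i using Fin.induction with
      | zero => simp
      | succ j ih =>
        have h := hstep j
        simp only [Fin.val_succ, Fin.coe_castSucc] at *
        omega
    have hlast := key (Fin.last k)
    have h0 := hbounds 0
    have hl := hbounds (Fin.last k)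
    simp only [Fin.val_last] at hlast
    omega

end OutFormal
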